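/- arXiv:1510.00634 — 4 statements merged into one kernel-verified Lean document; each statement's English description precedes it below -/
import Mathlib

section
/- Let w be a nonempty word of length n over a finite alphabet and let p > 0 be a divisor of n. Then p is a full Abelian period of w if and only if for every k with 0 ≤ k ≤ n/p − 1, the suffix w[kp .. n−1] of w starting at position k·p is a scaled factor of w. -/
/-- `p` is a full Abelian period of the word `w` of length `n`: `p > 0`,
`p` divides `n`, and all the consecutive blocks `w[kp .. (k+1)p - 1]` for
`0 ≤ k < n/p` have the same Parikh vector. -/
def FullAbelianPeriod {α : Type*} [DecidableEq α] (w : List α) (p : ℕ) : Prop :=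
  0 < p ∧ p ∣ w.length ∧
    ∀ k < w.length / p, ∀ a : α,
      ((w.drop (k * p)).take p).count a = (w.take p).count a

/-- `u` is a scaled factor of `w` (relative to the gcd `g` of the entries of
the Parikh vector of `w`): `u` is a factor of `w` and there is `k ≥ 0` with
`|u|_a = k * (|w|_a / g)` for every letter `a`. -/
def IsScaledFactor {α : Type*} [DecidableEq α] (g : ℕ) (w u : List α) : Prop :=
  u <:+: w ∧ ∃ k : ℕ, ∀ a : α, u.count a = k * (w.count a / g)

lemma sum_count_univ {α : Type*} [Fintype α] [DecidableEq α] (l : List α) :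
    ∑ a, l.count a = l.length := by
  induction l with
  | nil => simp
  | cons b t ih => simp [List.count_cons, Finset.sum_add_distrib, ih]

lemma suffix_split {α : Type*} (w : List α) (k p : ℕ) :
    w.drop (k * p) = (w.drop (k * p)).take p ++ w.drop ((k + 1) * p) := by
  conv_lhs => rw [← List.take_append_drop p (w.drop (k * p))]
  rw [List.drop_drop]
  ring_nf

/-- Let `w` be a nonempty word of length `n` and `p > 0` a divisor of `n`.
Then `p` is a full Abelian period of `w` if and only if for every
`0 ≤ k ≤ n/p - 1`, the suffix of `w` starting at position `k * p` is a
scaled factor of `w`. -/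
theorem fullAbelianPeriod_iff_scaled_suffixes {α : Type*} [Fintype α]
    [DecidableEq α] (w : List α) (hw : w ≠ []) (g : ℕ)
    (hg : g = Finset.univ.gcd fun a : α => w.count a)
    (p : ℕ) (hp : 0 < p) (hpn : p ∣ w.length) :
    FullAbelianPeriod w p ↔
      ∀ k < w.length / p, IsScaledFactor g w (w.drop (k * p)) := by
  set n := w.length with hn
  set m := n / p with hm
  have hmp : m * p = n := Nat.div_mul_cancel hpn
  have hn0 : 0 < n := List.length_pos_iff.mpr hw
  have hm0 : 0 < m := Nat.div_pos (Nat.le_of_dvd hn0 hpn) hp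
  have hgdvd : ∀ a : α, g ∣ w.count a := by
    intro a; rw [hg]; exact Finset.gcd_dvd (Finset.mem_univ a)
  have hgn : g ∣ n := by
    rw [hn, ← sum_count_univ w]
    exact Finset.dvd_sum fun a _ => hgdvd a
  constructor
  · rintro ⟨-, -, h⟩ k hk
    -- suffix counts: for k + d = m, count of drop (k*p) = d * block count
    have key : ∀ d k, k + d = m → ∀ a : α,
        (w.drop (k * p)).count a = d * ((w.take p).count a) := by
      intro d
      induction d with
      | zero =>
        intro k hk a
        have hkm : k = m := by omega
        have hkp : k * p = n := by rw [hkm, hmp]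
        rw [hkp, hn, List.drop_length]
        simp
      | succ d ih =>
        intro k hkd a
        have hk' : k < m := by omega
        rw [suffix_split w k p, List.count_append, h k hk' a, ih (k + 1) (by omega) a]
        ring
    -- m divides g
    have hma : ∀ a : α, w.count a = m * (w.take p).count a := by
      intro a
      have := key m 0 (by omega) a
      simpa using this
    have hmg : m ∣ g := by
      rw [hg]
      exact Finset.dvd_gcd fun a _ => ⟨(w.take p).count a, hma a⟩
    obtain ⟨t, ht⟩ := hmg
    have hg0 : 0 < g := by
      rcases Nat.eq_zero_or_pos g with h0 | h0
      · exfalso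
        have : n = 0 := by
          rw [hn, ← sum_count_univ w]
          exact Finset.sum_eq_zero fun a _ => Nat.eq_zero_of_zero_dvd (h0 ▸ hgdvd a)
        omega
      · exact h0
    refine ⟨(List.drop_suffix (k * p) w).isInfix, (m - k) * t, fun a => ?_⟩
    obtain ⟨u, hu⟩ := hgdvd a
    have hcu : w.count a / g = u := by rw [hu]; exact Nat.mul_div_cancel_left u hg0
    have hb : (w.take p).count a = t * u := by
      have h1 : m * (w.take p).count a = m * (t * u) := by
        rw [← hma a, hu, ht]; ring
      exact Nat.eq_of_mul_eq_mul_left hm0 h1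
    rw [key (m - k) k (by omega) a, hcu, hb]
    ring
  · intro h
    -- choose the scaling factor for each k ≤ m
    have key : ∀ k ≤ m, ∃ t, (∀ a : α, (w.drop (k * p)).count a = t * (w.count a / g)) ∧
        t * (n / g) = n - k * p := by
      intro k hk
      have hS : (∑ a : α, w.count a / g) * g = n := by
        rw [Finset.sum_mul]
        rw [hn, ← sum_count_univ w]
        exact Finset.sum_congr rfl fun a _ => Nat.div_mul_cancel (hgdvd a)
      have hg0 : 0 < g := by
        by_contra h0
        have : g = 0 := by omega
        rw [this, mul_zero] at hS
        omega
      have hSval : (∑ a : α, w.count a / g) = n / g := by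
        rw [← hS, Nat.mul_div_cancel _ hg0]
      rcases Nat.lt_or_ge k m with hk' | hk'
      · obtain ⟨-, t, ht⟩ := h k hk'
        refine ⟨t, ht, ?_⟩
        have hlen : (w.drop (k * p)).length = n - k * p := by simp [hn]
        calc t * (n / g) = ∑ a : α, t * (w.count a / g) := by
              rw [← Finset.mul_sum, hSval]
          _ = ∑ a : α, (w.drop (k * p)).count a := by
              exact Finset.sum_congr rfl fun a _ => (ht a).symm
          _ = n - k * p := by rw [sum_count_univ, hlen]
      · have hkm : k = m := by omega
        refine ⟨0, ?_, ?_⟩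
        · intro a; simp [hkm, hmp, hn]
        · simp [hkm, hmp]
    rcases Nat.lt_or_ge 1 1 with h11 | _
    · omega
    have hg0 : 0 < g := by
      by_contra h0
      have hgz : g = 0 := by omega
      obtain ⟨t, ht, -⟩ := key 0 (by omega)
      have := ht (w.get ⟨0, hn0⟩)
      simp only [hgz, Nat.div_zero, mul_zero, Nat.zero_mul, List.drop_zero] at this
      have hpos : 0 < w.count (w.get ⟨0, hn0⟩) := List.count_pos_iff.mpr (w.get_mem _)
      omega
    have hng0 : 0 < n / g := Nat.div_pos (Nat.le_of_dvd hn0 hgn) hg0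
    -- block difference lemma
    have blk : ∀ k < m, ∃ s, (∀ a : α, ((w.drop (k * p)).take p).count a = s * (w.count a / g)) ∧
        s * (n / g) = p := by
      intro k hk
      obtain ⟨t1, ht1, he1⟩ := key k (by omega)
      obtain ⟨t2, ht2, he2⟩ := key (k + 1) (by omega)
      have hpp : (k + 1) * p = k * p + p := by ring
      have hkp1 : (k + 1) * p ≤ n := by
        calc (k + 1) * p ≤ m * p := Nat.mul_le_mul_right p (by omega)
          _ = n := hmp
      have hle : t2 ≤ t1 := by
        have : t2 * (n / g) ≤ t1 * (n / g) := by omega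
        exact Nat.le_of_mul_le_mul_right this hng0
      refine ⟨t1 - t2, fun a => ?_, ?_⟩
      · have hsplit : (w.drop (k * p)).count a =
            ((w.drop (k * p)).take p).count a + (w.drop ((k + 1) * p)).count a := by
          conv_lhs => rw [suffix_split w k p]
          rw [List.count_append]
        have := ht1 a
        rw [hsplit, ht2 a] at this
        have hle2 : t2 * (w.count a / g) ≤ t1 * (w.count a / g) :=
          Nat.mul_le_mul_right _ hle
        rw [Nat.sub_mul]
        omega
      · rw [Nat.sub_mul]
        omega
    constructor
    · exact hp
    refine ⟨hpn, fun k hk a => ?_⟩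
    obtain ⟨s1, hs1, he1⟩ := blk k hk
    obtain ⟨s0, hs0, he0⟩ := blk 0 hm0
    have hss : s1 = s0 := by
      have : s1 * (n / g) = s0 * (n / g) := by omega
      exact Nat.eq_of_mul_eq_mul_right hng0 this
    have h0 : (w.take p) = (w.drop (0 * p)).take p := by simp
    rw [hs1 a, h0, hs0 a, hss]
end

section
/- Let w be a nonempty word of length n over a finite alphabet and let p be a full Abelian period of w. Suppose 0 ≤ i < j ≤ n are positions such that the suffixes of w starting at i and at j are both scaled factors of w, and no suffix of w starting at a position strictly between i and j is a scaled factor of w. Then j − i ≤ p. In particular, every full Abelian period of w is at least the length of the longest irreducible scaled factor appearing in the factorization of w into irreducible scaled factors. -/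
private lemma flatten_count_aux {α : Type*} [DecidableEq α] (c : α → ℕ)
    (us : List (List α)) (h : ∀ v ∈ us, ∃ k, ∀ a, v.count a = k * c a) :
    ∃ k, ∀ a, us.flatten.count a = k * c a := by
  induction us with
  | nil => exact ⟨0, by simp⟩
  | cons v t ih =>
    obtain ⟨k1, hk1⟩ := h v (by simp)
    obtain ⟨k2, hk2⟩ := ih (fun x hx => h x (by simp [hx]))
    exact ⟨k1 + k2, fun a => by simp [List.count_append, hk1, hk2, add_mul]⟩

private lemma split_count_aux {α : Type*} [DecidableEq α] (c : α → ℕ)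
    (x y : List α)
    (hxy : ∃ k, ∀ a, (x ++ y).count a = k * c a)
    (hy : ∃ k, ∀ a, y.count a = k * c a) :
    ∃ k, ∀ a, x.count a = k * c a := by
  obtain ⟨k1, h1⟩ := hxy
  obtain ⟨k2, h2⟩ := hy
  refine ⟨k1 - k2, fun a => ?_⟩
  have hh := h1 a
  rw [List.count_append] at hh
  have h2a := h2 a
  rw [Nat.sub_mul]
  omega


/-- A nonempty scaled factor of `w` is irreducible if it cannot be written as
the concatenation of two nonempty scaled factors of `w`. -/
def IsIrreducibleScaledFactor {α : Type*} [DecidableEq α]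
    (g : ℕ) (w v : List α) : Prop :=
  v ≠ [] ∧ IsScaledFactor g w v ∧
    ¬ ∃ v₁ v₂ : List α, v = v₁ ++ v₂ ∧ v₁ ≠ [] ∧ v₂ ≠ [] ∧
      IsScaledFactor g w v₁ ∧ IsScaledFactor g w v₂

/-- Let `p` be a full Abelian period of the nonempty word `w`. If
`0 ≤ i < j ≤ n` are positions such that the suffixes of `w` starting at `i`
and at `j` are scaled and no suffix starting strictly between `i` and `j` is
scaled, then `j - i ≤ p`. In particular, every full Abelian period of `w` is
at least the length of every irreducible scaled factor appearing in the
factorization of `w` into irreducible scaled factors. -/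
theorem fullAbelianPeriod_ge_gap {α : Type*} [Fintype α] [DecidableEq α]
    (w : List α) (hw : w ≠ []) (g : ℕ)
    (hg : g = Finset.univ.gcd fun a : α => w.count a)
    (p : ℕ) (hp : FullAbelianPeriod w p) :
    (∀ i j : ℕ, i < j → j ≤ w.length →
      IsScaledFactor g w (w.drop i) → IsScaledFactor g w (w.drop j) →
      (∀ m : ℕ, i < m → m < j → ¬ IsScaledFactor g w (w.drop m)) →
      j - i ≤ p) ∧
    (∀ vs : List (List α), vs.flatten = w →
      (∀ v ∈ vs, IsIrreducibleScaledFactor g w v) →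
      ∀ v ∈ vs, v.length ≤ p) := by
  obtain ⟨hp0, hdvd, hper⟩ := hp
  obtain ⟨q, hq⟩ := hdvd
  have hn0 : 0 < w.length := List.length_pos_iff.mpr hw
  have hq0 : 0 < q := by
    rcases Nat.eq_zero_or_pos q with h | h
    · rw [h, Nat.mul_zero] at hq; omega
    · exact h
  have hnq : w.length = q * p := by rw [hq]; ring
  have hqdiv : w.length / p = q := by rw [hq, Nat.mul_div_cancel_left _ hp0]
  set B : α → ℕ := fun a => (w.take p).count a with hB
  have htake : ∀ k, k ≤ q → ∀ a, (w.take (k * p)).count a = k * B a := by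
    intro k
    induction k with
    | zero => simp
    | succ k ih =>
      intro hk a
      have h1 : (k + 1) * p = k * p + p := by ring
      rw [h1, List.take_add, List.count_append, ih (by omega) a,
        hper k (by omega) a]
      ring
  have hw_count : ∀ a, w.count a = q * B a := by
    intro a
    have h := htake q le_rfl a
    rw [← hnq, List.take_length] at h
    exact h
  set d : ℕ := Finset.univ.gcd B with hd
  have hgd : g = q * d := by
    rw [hg]
    have h : (fun a : α => w.count a) = fun a => q * B a := funext hw_count
    rw [h, Finset.gcd_mul_left]
    simp [hd]
  have hc : ∀ a, w.count a / g = B a / d := by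
    intro a
    rw [hw_count, hgd, Nat.mul_div_mul_left _ _ hq0]
  have hd_dvd : ∀ a, d ∣ B a := fun a => Finset.gcd_dvd (Finset.mem_univ a)
  have hdropscaled : ∀ k, k ≤ q → IsScaledFactor g w (w.drop (k * p)) := by
    intro k hk
    refine ⟨(List.drop_suffix _ _).isInfix, (q - k) * d, fun a => ?_⟩
    have h1 : (w.take (k * p)).count a + (w.drop (k * p)).count a = w.count a := by
      conv_rhs => rw [← List.take_append_drop (k * p) w]
      rw [List.count_append]
    have h3 := htake k hk a
    have h4 := hw_count a
    rw [hc a]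
    have h6 : (q - k) * d * (B a / d) = (q - k) * B a := by
      rw [mul_assoc, Nat.mul_div_cancel' (hd_dvd a)]
    rw [h6, Nat.sub_mul]
    omega
  have part1 : ∀ i j : ℕ, i < j → j ≤ w.length →
      IsScaledFactor g w (w.drop i) → IsScaledFactor g w (w.drop j) →
      (∀ m : ℕ, i < m → m < j → ¬ IsScaledFactor g w (w.drop m)) →
      j - i ≤ p := by
    intro i j hij hjn _ _ hgap
    by_contra hpj
    push_neg at hpj
    have hdm := Nat.div_add_mod i p
    have hmodlt : i % p < p := Nat.mod_lt _ hp0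
    have hmexp : (i / p + 1) * p = p * (i / p) + p := by ring
    have hm1 : i < (i / p + 1) * p := by omega
    have hm2 : (i / p + 1) * p < j := by
      have hle : i / p * p ≤ i := Nat.div_mul_le_self i p
      omega
    have hk : i / p + 1 ≤ q := by
      have h1 : (i / p + 1) * p ≤ q * p := by omega
      exact Nat.le_of_mul_le_mul_right h1 hp0
    exact hgap _ hm1 hm2 (hdropscaled _ hk)
  refine ⟨part1, ?_⟩
  intro vs hflat hirr v hv
  obtain ⟨l₁, l₂, hvs⟩ := List.append_of_mem hv
  obtain ⟨hvne, hvscaled, hvirr⟩ := hirr v hv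
  have hscnt : ∀ v' ∈ vs, ∃ k, ∀ a, v'.count a = k * (w.count a / g) :=
    fun v' hv' => (hirr v' hv').2.1.2
  have hwdecomp : w = l₁.flatten ++ (v ++ l₂.flatten) := by
    rw [← hflat, hvs]; simp
  have hdropi : w.drop l₁.flatten.length = v ++ l₂.flatten := by
    conv_lhs => rw [hwdecomp]
    rw [List.drop_left]
  have hdropj : w.drop (l₁.flatten.length + v.length) = l₂.flatten := by
    have h1 : w.drop (l₁.flatten.length + v.length)
        = (w.drop l₁.flatten.length).drop v.length := by
      rw [List.drop_drop, Nat.add_comm]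
    rw [h1, hdropi, List.drop_left]
  have hjn : l₁.flatten.length + v.length ≤ w.length := by
    have h := congrArg List.length hwdecomp
    simp only [List.length_append] at h
    omega
  have hvpos : 0 < v.length := List.length_pos_iff.mpr hvne
  have hij : l₁.flatten.length < l₁.flatten.length + v.length := by omega
  have hmem : ∀ x ∈ v :: l₂, x ∈ vs := by
    intro x hx
    rw [hvs]
    rcases List.mem_cons.mp hx with h | h
    · exact List.mem_append_right _ (h ▸ List.mem_cons_self)
    · exact List.mem_append_right _ (List.mem_cons_of_mem _ h)
  have hsi : IsScaledFactor g w (w.drop l₁.flatten.length) := by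
    refine ⟨(List.drop_suffix _ _).isInfix, ?_⟩
    rw [hdropi]
    have h : v ++ l₂.flatten = (v :: l₂).flatten := by simp
    rw [h]
    exact flatten_count_aux _ _ (fun x hx => hscnt x (hmem x hx))
  have hsj : IsScaledFactor g w (w.drop (l₁.flatten.length + v.length)) := by
    refine ⟨(List.drop_suffix _ _).isInfix, ?_⟩
    rw [hdropj]
    exact flatten_count_aux _ _
      (fun x hx => hscnt x (hmem x (List.mem_cons_of_mem _ hx)))
  have hgap : ∀ m : ℕ, l₁.flatten.length < m → m < l₁.flatten.length + v.length →
      ¬ IsScaledFactor g w (w.drop m) := by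
    intro m h1 h2 hm
    have hmi : m - l₁.flatten.length ≤ v.length := by omega
    have hmi0 : 0 < m - l₁.flatten.length := by omega
    have hmi1 : m - l₁.flatten.length < v.length := by omega
    have hv12 : v = v.take (m - l₁.flatten.length) ++ v.drop (m - l₁.flatten.length) :=
      (List.take_append_drop _ _).symm
    have hdropm : w.drop m = v.drop (m - l₁.flatten.length) ++ l₂.flatten := by
      have h3 : w.drop m = (w.drop l₁.flatten.length).drop (m - l₁.flatten.length) := by
        rw [List.drop_drop, Nat.add_sub_cancel' (le_of_lt h1)]
      rw [h3, hdropi, List.drop_append_of_le_length hmi]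
    have hcj : ∃ k, ∀ a, l₂.flatten.count a = k * (w.count a / g) := by
      rw [← hdropj]; exact hsj.2
    have hc2 : ∃ k, ∀ a, (v.drop (m - l₁.flatten.length)).count a = k * (w.count a / g) :=
      split_count_aux _ _ l₂.flatten (by rw [← hdropm]; exact hm.2) hcj
    have hc1 : ∃ k, ∀ a, (v.take (m - l₁.flatten.length)).count a = k * (w.count a / g) := by
      refine split_count_aux _ _ (w.drop m) ?_ hm.2
      have h4 : v.take (m - l₁.flatten.length) ++ w.drop m = w.drop l₁.flatten.length := by
        rw [hdropm, hdropi, ← List.append_assoc, List.take_append_drop]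
      rw [h4]; exact hsi.2
    have hinf1 : v.take (m - l₁.flatten.length) <:+: w :=
      ((List.take_prefix _ _).isInfix).trans hvscaled.1
    have hinf2 : v.drop (m - l₁.flatten.length) <:+: w :=
      ((List.drop_suffix _ _).isInfix).trans hvscaled.1
    have hne1 : v.take (m - l₁.flatten.length) ≠ [] := by
      rw [← List.length_pos_iff, List.length_take]
      omega
    have hne2 : v.drop (m - l₁.flatten.length) ≠ [] := by
      rw [← List.length_pos_iff, List.length_drop]
      omega
    exact hvirr ⟨_, _, hv12, hne1, hne2, ⟨hinf1, hc1⟩, ⟨hinf2, hc2⟩⟩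
  have h := part1 _ _ hij hjn hsi hsj hgap
  omega
end

section
/- Every nonempty word w over a finite alphabet admits a factorization w = v₁v₂⋯v_r into nonempty irreducible scaled factors, and this factorization is unique: if w = v₁⋯v_r = v'₁⋯v'_t are two factorizations of w into nonempty irreducible scaled factors, then r = t and vᵢ = v'ᵢ for every i. -/
section Aux

variable {α : Type*} [DecidableEq α] {g : ℕ} {w : List α}

lemma split_scaled (hc : ∃ a, 0 < w.count a / g) (v₁ v₂ : List α) (k k₁ : ℕ)
    (h : ∀ a, (v₁ ++ v₂).count a = k * (w.count a / g))
    (h1 : ∀ a, v₁.count a = k₁ * (w.count a / g)) :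
    ∀ a, v₂.count a = (k - k₁) * (w.count a / g) := by
  obtain ⟨a₀, ha₀⟩ := hc
  have hk : k₁ ≤ k := by
    have := h a₀
    rw [List.count_append, h1 a₀] at this
    nlinarith [this, ha₀]
  intro a
  have := h a
  rw [List.count_append, h1 a] at this
  have h2 : k₁ * (w.count a / g) ≤ k * (w.count a / g) :=
    Nat.mul_le_mul_right _ hk
  rw [Nat.sub_mul]
  omega

lemma exists_fact (hc : ∃ a, 0 < w.count a / g) :
    ∀ n (u : List α), u.length ≤ n → u <:+ w →
      (∃ k : ℕ, ∀ a, u.count a = k * (w.count a / g)) →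
      ∃ vs : List (List α), vs.flatten = u ∧
        ∀ v ∈ vs, IsIrreducibleScaledFactor g w v := by
  intro n
  induction n with
  | zero =>
    intro u hlen _ _
    have : u = [] := List.eq_nil_of_length_eq_zero (Nat.le_zero.mp hlen)
    exact ⟨[], by simp [this], by simp⟩
  | succ n ih =>
    intro u hlen hsuff hsc
    rcases eq_or_ne u [] with rfl | hu
    · exact ⟨[], by simp, by simp⟩
    · classical
      set c : α → ℕ := fun a => w.count a / g with hcdef
      set s : Finset ℕ := (Finset.Icc 1 u.length).filter
        (fun i => ∃ k : ℕ, ∀ a, ((u.take i).count a) = k * c a) with hsdef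
      have hne : s.Nonempty := by
        refine ⟨u.length, ?_⟩
        simp only [hsdef, Finset.mem_filter, Finset.mem_Icc]
        refine ⟨⟨Nat.one_le_iff_ne_zero.mpr (by simpa using hu), le_refl _⟩, ?_⟩
        simpa using hsc
      set m := s.min' hne with hmdef
      have hmmem : m ∈ s := Finset.min'_mem _ _
      have hmmin : ∀ i ∈ s, m ≤ i := fun i hi => Finset.min'_le _ _ hi
      rw [hsdef, Finset.mem_filter, Finset.mem_Icc] at hmmem
      obtain ⟨⟨hm1, hmle⟩, km, hkm⟩ := hmmem
      set p := u.take m with hpdef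
      have hplen : p.length = m := by simp [hpdef, Nat.min_eq_left hmle]
      have hpne : p ≠ [] := by
        intro h; rw [h] at hplen; simp at hplen; omega
      have hpinfix : p <:+: w := ((List.take_prefix m u).isInfix).trans hsuff.isInfix
      have hpirr : IsIrreducibleScaledFactor g w p := by
        refine ⟨hpne, ⟨hpinfix, km, hkm⟩, ?_⟩
        rintro ⟨v₁, v₂, heq, hv₁, hv₂, ⟨_, k₁, hk₁⟩, _⟩
        have hv₁pp : v₁ <+: p := ⟨v₂, heq.symm⟩
        have hv₁p : v₁ <+: u := hv₁pp.trans (List.take_prefix m u)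
        have hv₁take : u.take v₁.length = v₁ := (List.prefix_iff_eq_take.mp hv₁p).symm
        have hlt : v₁.length < m := by
          have : v₁.length + v₂.length = m := by
            rw [← hplen, heq, List.length_append]
          have := List.length_pos_iff.mpr hv₂
          omega
        have : v₁.length ∈ s := by
          simp only [hsdef, Finset.mem_filter, Finset.mem_Icc]
          exact ⟨⟨List.length_pos_iff.mpr hv₁, by omega⟩, k₁, by rw [hv₁take]; exact hk₁⟩
        have := hmmin _ this
        omega
      obtain ⟨k, hk⟩ := hsc
      have hu'sc : ∀ a, (u.drop m).count a = (k - km) * c a := by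
        apply split_scaled hc (u.take m) (u.drop m) k km
        · intro a; rw [List.take_append_drop]; exact hk a
        · exact hkm
      obtain ⟨vs', hvs'fl, hvs'irr⟩ := ih (u.drop m)
        (by
          have : (u.drop m).length = u.length - m := List.length_drop
          have hup : 0 < u.length := List.length_pos_iff.mpr hu
          omega)
        ((List.drop_suffix m u).trans hsuff) ⟨k - km, hu'sc⟩
      refine ⟨p :: vs', ?_, ?_⟩
      · simp [hpdef, hvs'fl]
      · intro v hv
        rcases List.mem_cons.mp hv with rfl | hv
        · exact hpirr
        · exact hvs'irr v hv

lemma head_eq (hc : ∃ a, 0 < w.count a / g) {v v' : List α}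
    (h : IsIrreducibleScaledFactor g w v) (h' : IsIrreducibleScaledFactor g w v')
    (hpre : v <+: v') : v = v' := by
  obtain ⟨r, hr⟩ := hpre
  rcases eq_or_ne r [] with rfl | hrne
  · simpa using hr
  · exfalso
    obtain ⟨hvne, ⟨hvinf, k, hk⟩, _⟩ := h
    obtain ⟨hv'ne, ⟨hv'inf, k', hk'⟩, hirr⟩ := h'
    apply hirr
    refine ⟨v, r, hr.symm, hvne, hrne, ⟨hvinf, k, hk⟩, ?_⟩
    have hrinf : r <:+: v' := ⟨v, [], by simp [hr]⟩
    refine ⟨hrinf.trans hv'inf, k' - k, ?_⟩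
    apply split_scaled hc v r k' k
    · intro a; rw [hr]; exact hk' a
    · exact hk

lemma uniq_fact (hc : ∃ a, 0 < w.count a / g) :
    ∀ vs vs' : List (List α), vs.flatten = vs'.flatten →
      (∀ v ∈ vs, IsIrreducibleScaledFactor g w v) →
      (∀ v ∈ vs', IsIrreducibleScaledFactor g w v) → vs = vs' := by
  intro vs
  induction vs with
  | nil =>
    intro vs' hfl _ h'
    cases vs' with
    | nil => rfl
    | cons v' t' =>
      exfalso
      have := (h' v' (by simp)).1
      simp at hfl
      exact this hfl.1
  | cons v t ih =>
    intro vs' hfl h h'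
    cases vs' with
    | nil =>
      exfalso
      have := (h v (by simp)).1
      simp at hfl
      exact this hfl.1
    | cons v' t' =>
      simp only [List.flatten_cons] at hfl
      have hvv' : v = v' := by
        rcases le_or_gt v.length v'.length with hle | hlt
        · exact head_eq hc (h v (by simp)) (h' v' (by simp))
            (List.prefix_of_prefix_length_le ⟨t.flatten, hfl⟩
              ⟨t'.flatten, rfl⟩ hle)
        · exact (head_eq hc (h' v' (by simp)) (h v (by simp))
            (List.prefix_of_prefix_length_le ⟨t'.flatten, hfl.symm⟩
              ⟨t.flatten, rfl⟩ hlt.le)).symm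
      subst hvv'
      have : t.flatten = t'.flatten := List.append_cancel_left hfl
      rw [ih t' this (fun x hx => h x (by simp [hx])) (fun x hx => h' x (by simp [hx]))]

end Aux

/-- Every nonempty word `w` admits a factorization `w = v₁v₂⋯v_r` into
nonempty irreducible scaled factors, and this factorization is unique. -/
theorem irreducible_scaled_factorization {α : Type*} [Fintype α]
    [DecidableEq α] (w : List α) (hw : w ≠ []) (g : ℕ)
    (hg : g = Finset.univ.gcd fun a : α => w.count a) :
    (∃ vs : List (List α), vs.flatten = w ∧
      ∀ v ∈ vs, IsIrreducibleScaledFactor g w v) ∧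
    (∀ vs vs' : List (List α),
      vs.flatten = w → (∀ v ∈ vs, IsIrreducibleScaledFactor g w v) →
      vs'.flatten = w → (∀ v ∈ vs', IsIrreducibleScaledFactor g w v) →
      vs = vs') := by
  have hdvd : ∀ a : α, g ∣ w.count a := by
    intro a
    rw [hg]
    exact Finset.gcd_dvd (Finset.mem_univ a)
  have hc : ∃ a, 0 < w.count a / g := by
    obtain ⟨a, ha⟩ := List.exists_mem_of_ne_nil w hw
    have hpos : 0 < w.count a := List.count_pos_iff.mpr ha
    have hgpos : 0 < g := by
      rcases Nat.eq_zero_or_pos g with h0 | h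
      · exfalso; have := hdvd a; rw [h0] at this; omega
      · exact h
    exact ⟨a, Nat.div_pos (Nat.le_of_dvd hpos (hdvd a)) hgpos⟩
  constructor
  · obtain ⟨vs, h1, h2⟩ := exists_fact hc w.length w le_rfl (List.suffix_refl w)
      ⟨g, fun a => (Nat.mul_div_cancel' (hdvd a)).symm⟩
    exact ⟨vs, h1, h2⟩
  · intro vs vs' h1 h2 h3 h4
    exact uniq_fact hc vs vs' (h1.trans h3.symm) h2 h4
end

section
/- Let w be a nonempty word of length n over a finite alphabet, let g be the greatest common divisor of the entries of the Parikh vector of w, and let s = n/g. Then the set of full Abelian periods of w equals the set of integers of the form d·s where d is a positive divisor of g such that every positive multiple of d·s that is strictly less than n is the starting position of a scaled suffix of w. -/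
private lemma length_eq_sum_count' {α : Type*} [Fintype α] [DecidableEq α] (l : List α) :
    l.length = ∑ a, l.count a := by
  induction l with
  | nil => simp
  | cons x l ih => simp [List.count_cons, ih, Finset.sum_add_distrib, add_comm]

private lemma count_drop_split {α : Type*} [DecidableEq α] (l : List α) (i p : ℕ) (a : α) :
    (l.drop i).count a = ((l.drop i).take p).count a + (l.drop (i + p)).count a := by
  conv_lhs => rw [← List.take_append_drop p (l.drop i)]
  rw [List.count_append, List.drop_drop]

/-- Let `w` be a nonempty word of length `n`, `g` the gcd of the entries of
the Parikh vector of `w`, and `s = n / g`. The set of full Abelian periods of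
`w` equals the set of integers `d * s` where `d` is a positive divisor of `g`
such that every positive multiple of `d * s` that is strictly less than `n`
is the starting position of a scaled suffix of `w`. -/
theorem fullAbelianPeriods_eq {α : Type*} [Fintype α] [DecidableEq α]
    (w : List α) (hw : w ≠ []) (g s : ℕ)
    (hg : g = Finset.univ.gcd fun a : α => w.count a)
    (hs : s = w.length / g) :
    {p : ℕ | FullAbelianPeriod w p} =
      {p : ℕ | ∃ d : ℕ, 0 < d ∧ d ∣ g ∧ p = d * s ∧
        ∀ m : ℕ, 0 < m → m * (d * s) < w.length →
          IsScaledFactor g w (w.drop (m * (d * s)))} := by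
  set n := w.length with hn
  have hn0 : 0 < n := List.length_pos_iff.mpr hw
  have hgdvd : ∀ a : α, g ∣ w.count a := fun a => by
    rw [hg]; exact Finset.gcd_dvd (Finset.mem_univ a)
  have hsum : n = ∑ a, w.count a := length_eq_sum_count' w
  have hgn : g ∣ n := hsum ▸ Finset.dvd_sum fun a _ => hgdvd a
  have hg0 : 0 < g := by
    obtain ⟨a, ha⟩ := List.exists_mem_of_ne_nil w hw
    have h1 : 0 < w.count a := List.count_pos_iff.mpr ha
    rcases Nat.eq_zero_or_pos g with h | h
    · have := hgdvd a; rw [h, Nat.zero_dvd] at this; omega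
    · exact h
  have hgs : g * s = n := by rw [hs]; exact Nat.mul_div_cancel' hgn
  have hs0 : 0 < s := by
    rcases Nat.eq_zero_or_pos s with h | h
    · rw [h, Nat.mul_zero] at hgs; omega
    · exact h
  have hsumdiv : ∑ a, w.count a / g = s := by
    have h2 : g * ∑ a, w.count a / g = g * s := by
      rw [Finset.mul_sum, hgs, hsum]
      exact Finset.sum_congr rfl fun a _ => Nat.mul_div_cancel' (hgdvd a)
    exact Nat.eq_of_mul_eq_mul_left hg0 h2
  ext p
  simp only [Set.mem_setOf_eq]
  constructor
  · -- forward direction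
    rintro ⟨hp0, hpn, hblocks⟩
    set q := n / p with hq
    have hq0 : 0 < q := Nat.div_pos (Nat.le_of_dvd hn0 hpn) hp0
    have hqp : q * p = n := Nat.div_mul_cancel hpn
    set b : α → ℕ := fun a => (w.take p).count a with hb
    have key : ∀ j ≤ q, ∀ a, (w.drop ((q - j) * p)).count a = j * b a := by
      intro j
      induction j with
      | zero =>
        intro _ a
        simp only [Nat.sub_zero, hqp]
        simp [hn]
      | succ j ih =>
        intro hj a
        have hj' : j ≤ q := Nat.le_of_succ_le hj
        have hm : q - (j + 1) < q := by omega
        have hstep : (q - (j + 1)) * p + p = (q - j) * p := by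
          have h3 : q - j = (q - (j + 1)) + 1 := by omega
          rw [h3]; ring
        rw [count_drop_split w ((q - (j + 1)) * p) p a, hstep, ih hj',
          hblocks _ hm]
        ring
    have keym : ∀ m ≤ q, ∀ a, (w.drop (m * p)).count a = (q - m) * b a := by
      intro m hm a
      have h4 := key (q - m) (Nat.sub_le _ _) a
      rwa [Nat.sub_sub_self hm] at h4
    have hcount : ∀ a, w.count a = q * b a := by
      intro a
      have h5 := keym 0 (Nat.le_of_lt hq0) a
      simpa using h5
    set G : ℕ := Finset.univ.gcd b with hG
    have hgqG : g = q * G := by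
      rw [hg, hG]
      have h6 : (Finset.univ.gcd fun a : α => w.count a)
          = Finset.univ.gcd fun a => q * b a :=
        Finset.gcd_congr rfl fun a _ => hcount a
      rw [h6]
      simpa using (Finset.gcd_mul_left (s := (Finset.univ : Finset α)) (f := b) (a := q))
    have hG0 : 0 < G := by
      rcases Nat.eq_zero_or_pos G with h | h
      · rw [h, Nat.mul_zero] at hgqG; omega
      · exact h
    have hGb : ∀ a, G ∣ b a := fun a => hG ▸ Finset.gcd_dvd (Finset.mem_univ a)
    have hcdiv : ∀ a, w.count a / g = b a / G := by
      intro a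
      rw [hcount a, hgqG, Nat.mul_div_mul_left _ _ hq0]
    have hpGs : p = G * s := by
      have h7 : q * p = q * (G * s) := by
        rw [hqp, ← hgs, hgqG]; ring
      exact Nat.eq_of_mul_eq_mul_left hq0 h7
    refine ⟨G, hG0, ⟨q, by rw [hgqG]; ring⟩, hpGs, ?_⟩
    intro m hm hmlt
    rw [← hpGs] at hmlt ⊢
    refine ⟨(List.drop_suffix _ _).isInfix, (q - m) * G, fun a => ?_⟩
    have hmq : m ≤ q := by
      by_contra h
      push_neg at h
      have h8 : q * p ≤ m * p := Nat.mul_le_mul_right p (Nat.le_of_lt h)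
      omega
    rw [keym m hmq a, hcdiv a, Nat.mul_assoc, Nat.mul_div_cancel' (hGb a)]
  · -- backward direction
    rintro ⟨d, hd0, hdg, hpds, hsuf⟩
    subst hpds
    have hp0 : 0 < d * s := Nat.mul_pos hd0 hs0
    have hpn : d * s ∣ n := by
      obtain ⟨e, he⟩ := hdg
      exact ⟨e, by rw [← hgs, he]; ring⟩
    have key : ∀ m, m * (d * s) ≤ n → ∀ a,
        (w.drop (m * (d * s))).count a = (g - m * d) * (w.count a / g) := by
      intro m hm a
      rcases Nat.eq_zero_or_pos m with rfl | hm0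
      · simp [Nat.mul_div_cancel' (hgdvd a)]
      rcases eq_or_lt_of_le hm with heq | hlt
      · have hmd : m * d = g := by
          have h9 : m * d * s = g * s := by rw [Nat.mul_assoc, heq, hgs]
          exact Nat.eq_of_mul_eq_mul_right hs0 h9
        rw [heq]
        simp [hn, hmd]
      · obtain ⟨_, k, hk⟩ := hsuf m hm0 hlt
        have hlen : (w.drop (m * (d * s))).length = n - m * (d * s) := by
          simp [hn]
        have hmdg : m * d < g := by
          by_contra h
          push_neg at h
          have h10 : g * s ≤ m * d * s := Nat.mul_le_mul_right s h
          rw [hgs, Nat.mul_assoc] at h10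
          omega
        have hsumk : k * s = n - m * (d * s) := by
          have h11 : n - m * (d * s) = ∑ a, k * (w.count a / g) := by
            rw [← hlen, length_eq_sum_count']
            exact Finset.sum_congr rfl fun a _ => hk a
          rw [h11, ← Finset.mul_sum, hsumdiv]
        have hkval : k = g - m * d := by
          have h12 : (g - m * d) * s = n - m * (d * s) := by
            rw [Nat.sub_mul, hgs, Nat.mul_assoc]
          have h13 := hsumk.trans h12.symm
          exact Nat.eq_of_mul_eq_mul_right hs0 h13
        rw [hk a, hkval]
    refine ⟨hp0, hpn, ?_⟩
    intro k hk a
    have hq : n / (d * s) * (d * s) = n := Nat.div_mul_cancel hpn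
    have hk1 : (k + 1) * (d * s) ≤ n := by
      have h14 : (k + 1) * (d * s) ≤ n / (d * s) * (d * s) :=
        Nat.mul_le_mul_right _ hk
      omega
    have hkp : k * (d * s) ≤ n :=
      le_trans (Nat.mul_le_mul_right _ (Nat.le_succ k)) hk1
    have hsplit := count_drop_split w (k * (d * s)) (d * s) a
    have hstep : k * (d * s) + d * s = (k + 1) * (d * s) := by ring
    rw [hstep] at hsplit
    have e1 := key k hkp a
    have e2 := key (k + 1) hk1 a
    have hdmul : (k + 1) * d = k * d + d := by ring
    have hkd1 : (k + 1) * d ≤ g := by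
      have h15 : (k + 1) * d * s ≤ g * s := by rw [Nat.mul_assoc, hgs]; exact hk1
      exact Nat.le_of_mul_le_mul_right h15 hs0
    have hA : g - k * d = (g - (k + 1) * d) + d := by omega
    have hT : ((w.drop (k * (d * s))).take (d * s)).count a = d * (w.count a / g) := by
      rw [e1, e2, hA, Nat.add_mul] at hsplit
      omega
    -- now the first block
    have h1s : 1 * (d * s) ≤ n := by
      rw [Nat.one_mul]; exact Nat.le_of_dvd hn0 hpn
    have e0 := key 0 (by simp) a
    have e01 := key 1 h1s a
    simp only [Nat.zero_mul, Nat.one_mul, Nat.sub_zero, List.drop_zero] at e0 e01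
    have hsplit0 := count_drop_split w 0 (d * s) a
    simp only [List.drop_zero, Nat.zero_add] at hsplit0
    have hdg' : d ≤ g := Nat.le_of_dvd hg0 hdg
    have hB : g = (g - d) + d := by omega
    have hT0 : (w.take (d * s)).count a = d * (w.count a / g) := by
      have hgc : g * (w.count a / g) = (g - d) * (w.count a / g) + d * (w.count a / g) := by
        rw [← Nat.add_mul, Nat.sub_add_cancel hdg']
      rw [e0, e01, hgc] at hsplit0
      omega
    rw [hT, hT0]
end
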